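/- Let X⁰ be a copositive p×p matrix and suppose the set of its zeros on the simplex T_a(X⁰) = {t ≥ 0, ∑ t_k = 1, t^T X⁰ t = 0} is nonempty. If X(ε) is a family of copositive matrices converging to X⁰ as ε → 0, then the Hausdorff-type deviation δ(ε) = max_{t ∈ T_a(X(ε))} min_{τ ∈ T_a(X⁰)} ‖t − τ‖ converges to 0 as ε → 0, provided T_a(X(ε)) is nonempty for all small ε. -/

import Mathlib

open Matrix

/-- The set of normalized zeros of a matrix `X`: vectors in the standard
simplex with `tᵀ X t = 0`. -/
def Ta {p : ℕ} (X : Matrix (Fin p) (Fin p) ℝ) : Set (Fin p → ℝ) :=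
  {t | (∀ k, 0 ≤ t k) ∧ ∑ k, t k = 1 ∧ t ⬝ᵥ X.mulVec t = 0}

lemma quad_cont {p : ℕ} (X0 : Matrix (Fin p) (Fin p) ℝ) :
    Continuous fun t : Fin p → ℝ => t ⬝ᵥ X0.mulVec t := by
  simp only [dotProduct, Matrix.mulVec]
  fun_prop

lemma quad_bound {p : ℕ} (M : Matrix (Fin p) (Fin p) ℝ) (t : Fin p → ℝ)
    (ht0 : ∀ k, 0 ≤ t k) (hts : ∑ k, t k = 1) (b : ℝ)
    (hM : ∀ i j, |M i j| ≤ b) : t ⬝ᵥ M.mulVec t ≤ b := by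
  have key : ∀ i, ∑ j, t i * (b * t j) = t i * b := by
    intro i
    rw [← Finset.mul_sum, ← Finset.mul_sum, hts, mul_one]
  calc t ⬝ᵥ M.mulVec t = ∑ i, ∑ j, t i * (M i j * t j) := by
        simp [dotProduct, Matrix.mulVec, Finset.mul_sum]
    _ ≤ ∑ i, ∑ j, t i * (b * t j) := by
        refine Finset.sum_le_sum fun i _ => Finset.sum_le_sum fun j _ => ?_
        have h1 := ht0 i; have h2 := ht0 j
        have h3 := (abs_le.1 (hM i j)).2
        exact mul_le_mul_of_nonneg_left (mul_le_mul_of_nonneg_right h3 h2) h1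
    _ = b := by
        rw [Finset.sum_congr rfl fun i _ => key i, ← Finset.sum_mul, hts, one_mul]

lemma key_lemma {p : ℕ} (X0 : Matrix (Fin p) (Fin p) ℝ)
    (hX0 : ∀ t : Fin p → ℝ, (∀ k, 0 ≤ t k) → 0 ≤ t ⬝ᵥ X0.mulVec t)
    (δ : ℝ) (hδ : 0 < δ) :
    ∃ ρ > 0, ∀ t : Fin p → ℝ, (∀ k, 0 ≤ t k) → ∑ k, t k = 1 →
      t ⬝ᵥ X0.mulVec t < ρ → Metric.infDist t (Ta X0) < δ := by
  set K : Set (Fin p → ℝ) :=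
    stdSimplex ℝ (Fin p) ∩ {t | δ ≤ Metric.infDist t (Ta X0)} with hKdef
  have hKcomp : IsCompact K :=
    (isCompact_stdSimplex _ _).inter_right
      (isClosed_le continuous_const (Metric.continuous_infDist_pt _))
  by_cases hK : K.Nonempty
  · obtain ⟨t0, ht0K, hmin⟩ := hKcomp.exists_isMinOn hK (quad_cont X0).continuousOn
    refine ⟨t0 ⬝ᵥ X0.mulVec t0, ?_, ?_⟩
    · rcases lt_or_eq_of_le (hX0 t0 ht0K.1.1) with h | h
      · exact h
      · exfalso
        have hmem : t0 ∈ Ta X0 := ⟨ht0K.1.1, ht0K.1.2, h.symm⟩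
        have := ht0K.2
        simp only [Set.mem_setOf_eq] at this
        rw [Metric.infDist_zero_of_mem hmem] at this
        linarith
    · intro t ht0' hts hq
      by_contra h
      push_neg at h
      have htK : t ∈ K := ⟨⟨ht0', hts⟩, h⟩
      exact absurd (hmin htK) (not_le.2 hq)
  · refine ⟨1, one_pos, ?_⟩
    intro t ht0' hts _
    by_contra h
    push_neg at h
    exact hK ⟨t, ⟨ht0', hts⟩, h⟩

theorem stmt18 (p : ℕ) (X0 : Matrix (Fin p) (Fin p) ℝ)
    (hX0 : ∀ t : Fin p → ℝ, (∀ k, 0 ≤ t k) → 0 ≤ t ⬝ᵥ X0.mulVec t)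
    (hTa0 : (Ta X0).Nonempty)
    (X : ℝ → Matrix (Fin p) (Fin p) ℝ)
    (hcop : ∀ ε, ∀ t : Fin p → ℝ, (∀ k, 0 ≤ t k) → 0 ≤ t ⬝ᵥ (X ε).mulVec t)
    (hconv : Filter.Tendsto X (nhdsWithin 0 (Set.Ioi 0)) (nhds X0))
    (hne : ∀ᶠ ε in nhdsWithin 0 (Set.Ioi 0), (Ta (X ε)).Nonempty) :
    Filter.Tendsto
      (fun ε => sSup ((fun t => Metric.infDist t (Ta X0)) '' Ta (X ε)))
      (nhdsWithin 0 (Set.Ioi 0)) (nhds 0) := by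
  rw [Metric.tendsto_nhds]
  intro δ hδ
  obtain ⟨ρ, hρ, hkey⟩ := key_lemma X0 hX0 (δ/2) (by positivity)
  have hev : ∀ᶠ ε in nhdsWithin 0 (Set.Ioi 0),
      ∀ i j, dist (X ε i j) (X0 i j) < ρ/2 := by
    rw [Filter.eventually_all]
    intro i
    rw [Filter.eventually_all]
    intro j
    have hij : Filter.Tendsto (fun ε => X ε i j) (nhdsWithin 0 (Set.Ioi 0))
        (nhds (X0 i j)) :=
      ((continuous_id.matrix_elem i j).tendsto X0).comp hconv
    exact Metric.tendsto_nhds.1 hij (ρ/2) (by positivity)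
  filter_upwards [hev] with ε hε
  have hnonneg : 0 ≤ sSup ((fun t => Metric.infDist t (Ta X0)) '' Ta (X ε)) :=
    Real.sSup_nonneg (by rintro x ⟨t, _, rfl⟩; exact Metric.infDist_nonneg)
  rw [Real.dist_eq, sub_zero, abs_of_nonneg hnonneg]
  have hle : sSup ((fun t => Metric.infDist t (Ta X0)) '' Ta (X ε)) ≤ δ/2 := by
    apply Real.sSup_le _ (by positivity)
    rintro x ⟨t, ⟨ht0', hts, hq⟩, rfl⟩
    have hqX0 : t ⬝ᵥ X0.mulVec t < ρ := by
      have heq : t ⬝ᵥ X0.mulVec t = t ⬝ᵥ (X0 - X ε).mulVec t := by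
        rw [Matrix.sub_mulVec, dotProduct_sub, hq, sub_zero]
      rw [heq]
      have := quad_bound (X0 - X ε) t ht0' hts (ρ/2) (fun i j => by
        have := hε i j
        rw [Real.dist_eq] at this
        rw [Matrix.sub_apply, abs_sub_comm]
        linarith)
      linarith
    exact le_of_lt (hkey t ht0' hts hqX0)
  linarith
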